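/- Suppose E_n : V → ℝ converges uniformly on compact V ⊆ ℝ^m to a continuous function E, and p_n : V → [0,1] converges pointwise to the indicator 𝟙_F of a set F ⊆ V, uniformly on compact subsets of the interior of F and of the complement of the closure of F. If E ≥ 0 on V and sup_V E_n is bounded, then for any sequence u_n ∈ argmax_V (E_n · p_n) whose accumulation point u̅ lies in the interior of F or outside the closure of F, one has limsup_n (E_n(u_n) p_n(u_n)) ≤ sup_{u ∈ F} E(u). -/

import Mathlib

open Filter

theorem stmt15 (m : ℕ) (V : Set (EuclideanSpace ℝ (Fin m))) (hV : IsCompact V)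
    (F : Set (EuclideanSpace ℝ (Fin m))) (hFV : F ⊆ V) (hFne : F.Nonempty)
    (E : EuclideanSpace ℝ (Fin m) → ℝ) (hE : Continuous E)
    (En : ℕ → EuclideanSpace ℝ (Fin m) → ℝ)
    (hEn : TendstoUniformlyOn En E atTop V)
    (pn : ℕ → EuclideanSpace ℝ (Fin m) → ℝ)
    (hp01 : ∀ n u, pn n u ∈ Set.Icc (0 : ℝ) 1)
    (hppt : ∀ u ∈ V, Tendsto (fun n => pn n u) atTop
      (nhds (F.indicator (fun _ => (1 : ℝ)) u)))
    (hpin : ∀ Kc : Set (EuclideanSpace ℝ (Fin m)), IsCompact Kc → Kc ⊆ interior F →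
      TendstoUniformlyOn (fun n => pn n) (F.indicator fun _ => (1 : ℝ)) atTop Kc)
    (hpout : ∀ Kc : Set (EuclideanSpace ℝ (Fin m)), IsCompact Kc → Kc ⊆ (closure F)ᶜ →
      TendstoUniformlyOn (fun n => pn n) (F.indicator fun _ => (1 : ℝ)) atTop Kc)
    (hEnonneg : ∀ u ∈ V, 0 ≤ E u)
    (hEbdd : ∃ C : ℝ, ∀ n, ∀ u ∈ V, En n u ≤ C)
    (u : ℕ → EuclideanSpace ℝ (Fin m))
    (hmax : ∀ n, u n ∈ V ∧ ∀ v ∈ V, En n v * pn n v ≤ En n (u n) * pn n (u n))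
    (ubar : EuclideanSpace ℝ (Fin m))
    (hacc : ∃ φ : ℕ → ℕ, StrictMono φ ∧ Tendsto (u ∘ φ) atTop (nhds ubar))
    (hloc : ubar ∈ interior F ∨ ubar ∈ (closure F)ᶜ) :
    Filter.limsup (fun n => En n (u n) * pn n (u n)) atTop ≤ sSup (E '' F) := by
  obtain ⟨C, hC⟩ := hEbdd
  set S := sSup (E '' F) with hSdef
  have hSbdd : BddAbove (E '' F) :=
    (hV.image hE).bddAbove.mono (Set.image_mono (f := E) hFV)
  have hS0 : 0 ≤ S := by
    obtain ⟨x, hx⟩ := hFne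
    exact le_trans (hEnonneg x (hFV hx)) (le_csSup hSbdd ⟨x, hx, rfl⟩)
  have hclE : ∀ x ∈ closure F, E x ≤ S := by
    intro x hx
    have : closure F ⊆ {y | E y ≤ S} :=
      closure_minimal (fun y hy => le_csSup hSbdd ⟨y, hy, rfl⟩)
        (isClosed_le hE continuous_const)
    exact this hx
  set C' : ℝ := max C 1 with hC'def
  have hC'pos : 0 < C' := lt_of_lt_of_le one_pos (le_max_right _ _)
  have hev : ∀ ε : ℝ, 0 < ε → ∀ᶠ n in atTop,
      En n (u n) * pn n (u n) ≤ S + ε := by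
    intro ε hε
    set K : Set (EuclideanSpace ℝ (Fin m)) := V ∩ E ⁻¹' Set.Ici (S + ε / 2) with hKdef
    have hKcomp : IsCompact K :=
      hV.inter_right (IsClosed.preimage hE isClosed_Ici)
    have hKout : K ⊆ (closure F)ᶜ := by
      intro x hx hxcl
      have h1 : E x ≤ S := hclE x hxcl
      have h2 : S + ε / 2 ≤ E x := hx.2
      linarith
    have hKF : ∀ x ∈ K, F.indicator (fun _ => (1 : ℝ)) x = 0 := by
      intro x hx
      exact Set.indicator_of_notMem (fun hxF => hKout hx (subset_closure hxF)) _
    have h1 : ∀ᶠ n in atTop, ∀ x ∈ K, dist (F.indicator (fun _ => (1 : ℝ)) x) (pn n x) < ε / C' :=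
      (Metric.tendstoUniformlyOn_iff.mp (hpout K hKcomp hKout)) (ε / C') (div_pos hε hC'pos)
    have h2 : ∀ᶠ n in atTop, ∀ x ∈ V, dist (E x) (En n x) < ε / 2 :=
      (Metric.tendstoUniformlyOn_iff.mp hEn) (ε / 2) (by linarith)
    filter_upwards [h1, h2] with n hn1 hn2
    have huV : u n ∈ V := (hmax n).1
    have hp0 : 0 ≤ pn n (u n) := (hp01 n (u n)).1
    have hp1 : pn n (u n) ≤ 1 := (hp01 n (u n)).2
    by_cases hK : u n ∈ K
    · -- far from F : pn is small
      have hps : pn n (u n) < ε / C' := by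
        have := hn1 (u n) hK
        rw [hKF (u n) hK] at this
        rw [Real.dist_eq] at this
        have := abs_lt.mp this
        linarith [this.2]
      have hEnC : En n (u n) ≤ C' := le_trans (hC n (u n) huV) (le_max_left _ _)
      calc En n (u n) * pn n (u n) ≤ C' * pn n (u n) :=
            mul_le_mul_of_nonneg_right hEnC hp0
        _ ≤ C' * (ε / C') := by
            exact mul_le_mul_of_nonneg_left (le_of_lt hps) (le_of_lt hC'pos)
        _ = ε := by field_simp
        _ ≤ S + ε := by linarith
    · -- E (u n) is not large
      have hEu : E (u n) < S + ε / 2 := by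
        by_contra h
        exact hK ⟨huV, le_of_not_gt h⟩
      have hEnu : En n (u n) < E (u n) + ε / 2 := by
        have := hn2 (u n) huV
        rw [Real.dist_eq] at this
        have := abs_lt.mp this
        linarith [this.1]
      by_cases hEpos : 0 ≤ En n (u n)
      · calc En n (u n) * pn n (u n) ≤ En n (u n) * 1 :=
              mul_le_mul_of_nonneg_left hp1 hEpos
          _ = En n (u n) := mul_one _
          _ ≤ S + ε := by linarith
      · have : En n (u n) * pn n (u n) ≤ 0 :=
          mul_nonpos_of_nonpos_of_nonneg (le_of_not_ge hEpos) hp0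
        linarith
  have hlb : ∀ᶠ n in atTop, (-1 : ℝ) ≤ En n (u n) * pn n (u n) := by
    have h2 : ∀ᶠ n in atTop, ∀ x ∈ V, dist (E x) (En n x) < 1 :=
      (Metric.tendstoUniformlyOn_iff.mp hEn) 1 one_pos
    filter_upwards [h2] with n hn2
    have huV : u n ∈ V := (hmax n).1
    have hp0 : 0 ≤ pn n (u n) := (hp01 n (u n)).1
    have hp1 : pn n (u n) ≤ 1 := (hp01 n (u n)).2
    have hEnl : -1 ≤ En n (u n) := by
      have := abs_lt.mp (Real.dist_eq _ _ ▸ hn2 (u n) huV)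
      have := hEnonneg (u n) huV
      linarith
    by_cases hEpos : 0 ≤ En n (u n)
    · nlinarith
    · calc (-1 : ℝ) ≤ En n (u n) := hEnl
        _ = En n (u n) * 1 := (mul_one _).symm
        _ ≤ En n (u n) * pn n (u n) :=
            mul_le_mul_of_nonpos_left hp1 (le_of_not_ge hEpos)
  refine le_of_forall_pos_le_add fun ε hε => ?_
  exact Filter.limsup_le_of_le
    (Filter.isCoboundedUnder_le_of_eventually_le atTop hlb) (hev ε hε)
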